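/- arXiv:2412.12999 — 3 statements merged into one kernel-verified Lean document; each statement's English description precedes it below -/
import Mathlib

section
/- Let a = {a_n} be a positive non-increasing summable sequence, C_a its decreasing Cantor set, θ ∈ (0,1], and s' > 0 such that for some k', s' < (−ρ(k') log 2)/(log s_{ρ(k')}) where ρ minimizes s_m^{1/m} over m ∈ [k', γ(k')+1] with γ(k') = max{m : s_m ≥ s_{k'}^{1/θ}}. Then every finite cover {U_i} of C_a with s_{k'}^{1/θ} ≤ |U_i| ≤ s_{k'} satisfies ∑_i |U_i|^{s'} ≥ 1/16. -/
open Filter Set Topology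

/-- Number of closed balls of radius `δ` needed to cover `F`. -/
noncomputable def coverNum (F : Set ℝ) (δ : ℝ) : ℕ :=
  sInf {n : ℕ | ∃ S : Finset ℝ, S.card = n ∧ F ⊆ ⋃ x ∈ S, Metric.closedBall x δ}

/-- Upper box-counting dimension. -/
noncomputable def upperBoxDim (F : Set ℝ) : ℝ :=
  limsup (fun δ : ℝ => Real.log (coverNum F δ) / -Real.log δ) (nhdsWithin 0 (Set.Ioi 0))

/-- Lower box-counting dimension. -/
noncomputable def lowerBoxDim (F : Set ℝ) : ℝ :=
  liminf (fun δ : ℝ => Real.log (coverNum F δ) / -Real.log δ) (nhdsWithin 0 (Set.Ioi 0))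

/-- Assouad dimension. -/
noncomputable def assouadDim (E : Set ℝ) : ℝ :=
  sInf {α : ℝ | ∃ c > (0:ℝ), ∃ ρ > (0:ℝ), ∀ x ∈ E, ∀ r R : ℝ, 0 < r → r < R → R < ρ →
    (coverNum (Metric.ball x R ∩ E) r : ℝ) ≤ c * (R / r) ^ α}

/-- Lower (Assouad) dimension. -/
noncomputable def lowerAssouadDim (E : Set ℝ) : ℝ :=
  sSup {α : ℝ | ∃ c > (0:ℝ), ∃ ρ > (0:ℝ), ∀ x ∈ E, ∀ r R : ℝ, 0 < r → r < R → R < ρ →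
    c * (R / r) ^ α ≤ (coverNum (Metric.ball x R ∩ E) r : ℝ)}

/-- Upper θ-intermediate dimension (with the convention that at θ = 0 it is the
Hausdorff dimension). -/
noncomputable def upperIntDim (θ : ℝ) (F : Set ℝ) : ℝ :=
  if θ = 0 then (dimH F).toReal else
  sInf {s : ℝ | 0 ≤ s ∧ ∀ ε > (0:ℝ), ∃ δ₀ > (0:ℝ), ∀ δ : ℝ, 0 < δ → δ ≤ δ₀ →
    ∃ (I : Finset ℕ) (U : ℕ → Set ℝ), (F ⊆ ⋃ i ∈ I, U i) ∧
      (∀ i ∈ I, δ ^ (1 / θ) ≤ Metric.diam (U i) ∧ Metric.diam (U i) ≤ δ) ∧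
      ∑ i ∈ I, Metric.diam (U i) ^ s ≤ ε}

/-- Lower θ-intermediate dimension (with the convention that at θ = 0 it is the
Hausdorff dimension). -/
noncomputable def lowerIntDim (θ : ℝ) (F : Set ℝ) : ℝ :=
  if θ = 0 then (dimH F).toReal else
  sInf {s : ℝ | 0 ≤ s ∧ ∀ ε > (0:ℝ), ∀ δ₀ > (0:ℝ), ∃ δ : ℝ, 0 < δ ∧ δ ≤ δ₀ ∧
    ∃ (I : Finset ℕ) (U : ℕ → Set ℝ), (F ⊆ ⋃ i ∈ I, U i) ∧
      (∀ i ∈ I, δ ^ (1 / θ) ≤ Metric.diam (U i) ∧ Metric.diam (U i) ≤ δ) ∧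
      ∑ i ∈ I, Metric.diam (U i) ^ s ≤ ε}

/-- tails `x_n = ∑_{i=n}^∞ a_i` (the sequence `a` is indexed from 1;
the value `a 0` is irrelevant). -/
noncomputable def xseq (a : ℕ → ℝ) (n : ℕ) : ℝ := ∑' i : ℕ, a (n + i)

/-- `s_n = 2^{-n} x_{2^n}`. -/
noncomputable def sseq (a : ℕ → ℝ) (n : ℕ) : ℝ := xseq a (2 ^ n) / 2 ^ n

/-- `r_n = 2^{-n} ∑_{i=2^n}^{2^{n+1}-1} a_i`. -/
noncomputable def rseq (a : ℕ → ℝ) (n : ℕ) : ℝ :=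
  (∑ i ∈ Finset.range (2 ^ n), a (2 ^ n + i)) / 2 ^ n

/-- The countable complementary set `D_a = {x_k : k ≥ 1} ∪ {0}`. -/
noncomputable def Da (a : ℕ → ℝ) : Set ℝ := {0} ∪ {y : ℝ | ∃ k ≥ 1, y = xseq a k}

/-- Length of the interval corresponding to node `m` (in binary-tree indexing, root `1`)
in the construction of the decreasing Cantor set: the sum of the gaps in the subtree of `m`. -/
noncomputable def clen (a : ℕ → ℝ) (m : ℕ) : ℝ :=
  ∑' k : ℕ, ∑ i ∈ Finset.range (2 ^ k), a (2 ^ k * m + i)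

/-- Left endpoint of the interval corresponding to node `m`. -/
noncomputable def lft (a : ℕ → ℝ) : ℕ → ℝ
  | 0 => 0
  | 1 => 0
  | n + 2 =>
    if (n + 2) % 2 = 0 then lft a ((n + 2) / 2)
    else lft a ((n + 2) / 2) + clen a (n + 1) + a ((n + 2) / 2)
termination_by n => n
decreasing_by all_goals omega

/-- The closed interval corresponding to node `m`:  node `2^n + j - 1` is the
interval `I_{n,j}` of step `n`, for `1 ≤ j ≤ 2^n`. -/
noncomputable def node (a : ℕ → ℝ) (m : ℕ) : Set ℝ := Set.Icc (lft a m) (lft a m + clen a m)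

/-- The decreasing Cantor set `C_a` associated with the sequence `a`. -/
noncomputable def cantorSetOf (a : ℕ → ℝ) : Set ℝ :=
  ⋂ n : ℕ, ⋃ j ∈ Finset.Icc 1 (2 ^ n), node a (2 ^ n + j - 1)

/-- `E` is a complementary set of the sequence `a`: a closed subset of `[0,1]`
whose complement in `[0,1]` is a disjoint union of open intervals of lengths `a_1, a_2, …`. -/
def IsComplSet (a : ℕ → ℝ) (E : Set ℝ) : Prop :=
  ∃ g : ℕ → ℝ,
    (∀ n ≥ 1, Set.Ioo (g n) (g n + a n) ⊆ Set.Icc 0 1) ∧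
    (∀ m ≥ 1, ∀ n ≥ 1, m ≠ n →
      Disjoint (Set.Ioo (g m) (g m + a m)) (Set.Ioo (g n) (g n + a n))) ∧
    E = Set.Icc 0 1 \ ⋃ n ∈ {k : ℕ | 1 ≤ k}, Set.Ioo (g n) (g n + a n)

/-- `γ_{θ,a}(r) = max{ m : s_m ≥ s_r^{1/θ} }`. -/
noncomputable def gammaIdx (a : ℕ → ℝ) (θ : ℝ) (r : ℕ) : ℕ :=
  sSup {m : ℕ | sseq a r ^ (1 / θ) ≤ sseq a m}

section Aux

variable {a : ℕ → ℝ}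

lemma amono' (hmono : ∀ n ≥ 1, a (n + 1) ≤ a n) :
    ∀ p q : ℕ, 1 ≤ p → p ≤ q → a q ≤ a p := by
  intro p q hp hpq
  induction q, hpq using Nat.le_induction with
  | base => exact le_rfl
  | succ n hn ih => exact le_trans (hmono n (hp.trans hn)) ih

lemma xsummable (hsumm : Summable fun n => a (n + 1)) {n : ℕ} (hn : 1 ≤ n) :
    Summable fun i => a (n + i) := by
  have h1 : Summable fun i => a (i + (n - 1) + 1) :=
    (summable_nat_add_iff (f := fun m => a (m + 1)) (n - 1)).2 hsumm
  have : (fun i => a (n + i)) = fun i => a (i + (n - 1) + 1) := by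
    funext i; congr 1; omega
  rw [this]; exact h1

lemma x_nonneg (hpos : ∀ n ≥ 1, 0 < a n) {n : ℕ} (hn : 1 ≤ n) : 0 ≤ xseq a n :=
  tsum_nonneg fun i => (hpos _ (by omega)).le

lemma x_pos (hpos : ∀ n ≥ 1, 0 < a n) (hsumm : Summable fun n => a (n + 1))
    {n : ℕ} (hn : 1 ≤ n) : 0 < xseq a n := by
  have h : a (n + 0) ≤ ∑' i, a (n + i) :=
    Summable.le_tsum (xsummable hsumm hn) 0 (fun i _ => (hpos _ (by omega)).le)
  rw [Nat.add_zero] at h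
  exact lt_of_lt_of_le (hpos n hn) h

lemma x_rec (hsumm : Summable fun n => a (n + 1)) {n : ℕ} (hn : 1 ≤ n) :
    xseq a n = a n + xseq a (n + 1) := by
  have h := Summable.tsum_eq_zero_add (xsummable hsumm hn)
  have h2 : (fun i => a (n + (i + 1))) = fun i => a (n + 1 + i) := by
    funext i; congr 1; omega
  simpa [xseq, h2] using h

lemma x_anti (hpos : ∀ n ≥ 1, 0 < a n) (hsumm : Summable fun n => a (n + 1)) :
    ∀ p q : ℕ, 1 ≤ p → p ≤ q → xseq a q ≤ xseq a p := by
  intro p q hp hpq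
  induction q, hpq using Nat.le_induction with
  | base => exact le_rfl
  | succ n hn ih =>
    refine le_trans ?_ ih
    rw [x_rec hsumm (hp.trans hn)]
    have := hpos n (hp.trans hn)
    linarith

lemma x_one (htot : ∑' n : ℕ, a (n + 1) = 1) : xseq a 1 = 1 := by
  rw [xseq, ← htot]
  congr 1; funext i; congr 1; omega

lemma s_pos (hpos : ∀ n ≥ 1, 0 < a n) (hsumm : Summable fun n => a (n + 1)) (n : ℕ) :
    0 < sseq a n := by
  have : (0:ℝ) < 2 ^ n := by positivity
  exact div_pos (x_pos hpos hsumm (Nat.one_le_two_pow)) this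

lemma s_le (hpos : ∀ n ≥ 1, 0 < a n) (hsumm : Summable fun n => a (n + 1))
    (htot : ∑' n : ℕ, a (n + 1) = 1) (n : ℕ) : sseq a n ≤ (1/2) ^ n := by
  have hx : xseq a (2 ^ n) ≤ 1 := by
    rw [← x_one htot]
    exact x_anti hpos hsumm 1 (2 ^ n) le_rfl Nat.one_le_two_pow
  have h2 : (0:ℝ) < 2 ^ n := by positivity
  rw [sseq, div_pow, one_pow]
  gcongr

end Aux

section Clen
variable {a : ℕ → ℝ}

lemma finsum_le_x (hpos : ∀ n ≥ 1, 0 < a n) (hsumm : Summable fun n => a (n + 1))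
    {m : ℕ} (hm : 1 ≤ m) (s : Finset ℕ) (hs : ∀ j ∈ s, m ≤ j) :
    ∑ j ∈ s, a j ≤ xseq a m := by
  classical
  have h1 : ∑ i ∈ s.image (fun j => j - m), a (m + i) = ∑ j ∈ s, a (m + (j - m)) :=
    Finset.sum_image (by
      intro x hx y hy hxy
      have := hs x hx; have := hs y hy; simp only at hxy; omega)
  have h2 : ∑ j ∈ s, a (m + (j - m)) = ∑ j ∈ s, a j :=
    Finset.sum_congr rfl (fun j hj => by rw [Nat.add_sub_cancel' (hs j hj)])
  calc ∑ j ∈ s, a j = ∑ i ∈ s.image (fun j => j - m), a (m + i) := by rw [h1, h2]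
    _ ≤ xseq a m := Summable.sum_le_tsum _ (fun i _ => (hpos _ (by omega)).le) (xsummable hsumm hm)

lemma clen_summable (hpos : ∀ n ≥ 1, 0 < a n) (hsumm : Summable fun n => a (n + 1))
    {m : ℕ} (hm : 1 ≤ m) :
    Summable fun k => ∑ i ∈ Finset.range (2 ^ k), a (2 ^ k * m + i) := by
  classical
  apply summable_of_sum_range_le (c := xseq a m)
  · intro k
    refine Finset.sum_nonneg fun i _ => (hpos _ ?_).le
    have h1 : 1 ≤ 2 ^ k := Nat.one_le_two_pow
    have h2 : 1 * 1 ≤ 2 ^ k * m := Nat.mul_le_mul h1 hm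
    omega
  · intro K
    have key : ∀ k k' : ℕ, k < k' →
        Disjoint ((Finset.range (2 ^ k)).image (fun i => 2 ^ k * m + i))
          ((Finset.range (2 ^ k')).image (fun i => 2 ^ k' * m + i)) := by
      intro k k' hlt
      refine Finset.disjoint_left.2 ?_
      intro x hx hx'
      simp only [Finset.mem_image, Finset.mem_range] at hx hx'
      obtain ⟨i, hi, rfl⟩ := hx
      obtain ⟨i', hi', he⟩ := hx'
      have h2 : 2 ^ (k + 1) ≤ 2 ^ k' := Nat.pow_le_pow_right (by norm_num) hlt
      have h3 : 2 ^ (k + 1) * m ≤ 2 ^ k' * m := Nat.mul_le_mul_right m h2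
      have h4 : 2 ^ (k + 1) * m = 2 ^ k * m + 2 ^ k * m := by ring
      have h5 : 2 ^ k * 1 ≤ 2 ^ k * m := Nat.mul_le_mul_left _ hm
      omega
    have hdis : (↑(Finset.range K) : Set ℕ).PairwiseDisjoint
        (fun k => (Finset.range (2 ^ k)).image (fun i => 2 ^ k * m + i)) := by
      intro k _ k' _ hkk'
      rcases Nat.lt_or_ge k k' with h | h
      · exact key k k' h
      · exact (key k' k (by omega)).symm
    have hsum_eq : ∑ k ∈ Finset.range K, ∑ i ∈ Finset.range (2 ^ k), a (2 ^ k * m + i)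
        = ∑ x ∈ (Finset.range K).biUnion
            (fun k => (Finset.range (2 ^ k)).image (fun i => 2 ^ k * m + i)), a x := by
      rw [Finset.sum_biUnion hdis]
      exact Finset.sum_congr rfl fun k _ =>
        (Finset.sum_image (by intro x _ y _ h; omega)).symm
    rw [hsum_eq]
    refine finsum_le_x hpos hsumm hm _ ?_
    intro j hj
    simp only [Finset.mem_biUnion, Finset.mem_image, Finset.mem_range] at hj
    obtain ⟨k, -, i, -, rfl⟩ := hj
    have h1 : 1 ≤ 2 ^ k := Nat.one_le_two_pow
    have h5 : 1 * m ≤ 2 ^ k * m := Nat.mul_le_mul_right m h1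
    omega

lemma clen_nonneg (hpos : ∀ n ≥ 1, 0 < a n) {m : ℕ} (hm : 1 ≤ m) : 0 ≤ clen a m := by
  refine tsum_nonneg fun k => Finset.sum_nonneg fun i _ => (hpos _ ?_).le
  have h1 : 1 ≤ 2 ^ k := Nat.one_le_two_pow
  have h2 : 1 * 1 ≤ 2 ^ k * m := Nat.mul_le_mul h1 hm
  omega

lemma clen_anti (hpos : ∀ n ≥ 1, 0 < a n) (hmono : ∀ n ≥ 1, a (n + 1) ≤ a n)
    (hsumm : Summable fun n => a (n + 1)) {p q : ℕ} (hp : 1 ≤ p) (hpq : p ≤ q) :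
    clen a q ≤ clen a p := by
  refine Summable.tsum_le_tsum (fun k => Finset.sum_le_sum fun i _ => ?_)
    (clen_summable hpos hsumm (hp.trans hpq)) (clen_summable hpos hsumm hp)
  refine amono' hmono _ _ ?_ ?_
  · have h1 : 1 ≤ 2 ^ k := Nat.one_le_two_pow
    have h2 : 1 * 1 ≤ 2 ^ k * p := Nat.mul_le_mul h1 hp
    omega
  · exact Nat.add_le_add_right (Nat.mul_le_mul_left _ hpq) i

lemma clen_rec (hpos : ∀ n ≥ 1, 0 < a n) (hsumm : Summable fun n => a (n + 1))
    {m : ℕ} (hm : 1 ≤ m) :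
    clen a m = a m + clen a (2 * m) + clen a (2 * m + 1) := by
  have h0 := Summable.tsum_eq_zero_add (clen_summable hpos hsumm hm)
  have hsplit : ∀ k : ℕ, ∑ i ∈ Finset.range (2 ^ (k + 1)), a (2 ^ (k + 1) * m + i)
      = ∑ i ∈ Finset.range (2 ^ k), a (2 ^ k * (2 * m) + i)
        + ∑ i ∈ Finset.range (2 ^ k), a (2 ^ k * (2 * m + 1) + i) := by
    intro k
    rw [show (2:ℕ) ^ (k+1) = 2 ^ k + 2 ^ k by ring, Finset.sum_range_add]
    congr 1
    · exact Finset.sum_congr rfl fun i _ => by congr 1; ring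
    · exact Finset.sum_congr rfl fun i _ => by congr 1; ring
  have h1 : ∑' k : ℕ, ∑ i ∈ Finset.range (2 ^ (k + 1)), a (2 ^ (k + 1) * m + i)
      = clen a (2 * m) + clen a (2 * m + 1) := by
    rw [tsum_congr hsplit]
    exact Summable.tsum_add (clen_summable hpos hsumm (by omega)) (clen_summable hpos hsumm (by omega))
  have h2 : ∑ i ∈ Finset.range (2 ^ 0), a (2 ^ 0 * m + i) = a m := by simp
  rw [clen] at *
  rw [h0, h2, h1, add_assoc]
  rfl

end Clen

section I4
variable {a : ℕ → ℝ}

lemma s_le_clen (hpos : ∀ n ≥ 1, 0 < a n) (hmono : ∀ n ≥ 1, a (n + 1) ≤ a n)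
    (hsumm : Summable fun n => a (n + 1)) {t : ℕ} (ht : 1 ≤ t) :
    sseq a t ≤ clen a (2 ^ t - 1) := by
  set m₀ := 2 ^ t - 1 with hm₀
  have h2t : 2 ≤ 2 ^ t := by
    calc 2 = 2 ^ 1 := rfl
    _ ≤ 2 ^ t := Nat.pow_le_pow_right (by norm_num) ht
  have hm₀1 : 1 ≤ m₀ := by omega
  have hkey : ∀ k : ℕ, 2 ^ k * m₀ + 2 ^ k = 2 ^ (t + k) := by
    intro k
    have e1 : m₀ + 1 = 2 ^ t := by omega
    calc 2 ^ k * m₀ + 2 ^ k = 2 ^ k * (m₀ + 1) := by ring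
    _ = 2 ^ k * 2 ^ t := by rw [e1]
    _ = 2 ^ (t + k) := by rw [← pow_add]; ring_nf
  set g : ℕ → ℝ := fun k => (2:ℝ) ^ k * a (2 ^ (t + k)) with hg
  have hg_nonneg : ∀ k, 0 ≤ g k := fun k =>
    mul_nonneg (by positivity) (hpos _ Nat.one_le_two_pow).le
  have hconst : ∀ c M : ℕ, ∑ _i ∈ Finset.range (2 ^ c), a M
      = (2:ℝ) ^ c * a M := by
    intro c M
    rw [Finset.sum_const, Finset.card_range, nsmul_eq_mul]
    push_cast; ring
  have hg_le : ∀ k, g k ≤ ∑ i ∈ Finset.range (2 ^ k), a (2 ^ k * m₀ + i) := by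
    intro k
    have hterm : ∀ i ∈ Finset.range (2 ^ k), a (2 ^ (t + k)) ≤ a (2 ^ k * m₀ + i) := by
      intro i hi
      rw [Finset.mem_range] at hi
      have e := hkey k
      have h5 : 1 * 1 ≤ 2 ^ k * m₀ := Nat.mul_le_mul Nat.one_le_two_pow hm₀1
      exact amono' hmono _ _ (by omega) (by omega)
    calc g k = ∑ _i ∈ Finset.range (2 ^ k), a (2 ^ (t + k)) := (hconst k _).symm
    _ ≤ _ := Finset.sum_le_sum hterm
  have hcs := clen_summable hpos hsumm hm₀1
  have hg_summable : Summable g := Summable.of_nonneg_of_le hg_nonneg hg_le hcs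
  have hgs_le : ∑' k, g k ≤ clen a m₀ := Summable.tsum_le_tsum hg_le hg_summable hcs
  have hblk : ∀ K : ℕ, ∑ i ∈ Finset.range (2 ^ (t + K) - 2 ^ t), a (2 ^ t + i)
      ≤ (2:ℝ) ^ t * ∑ k ∈ Finset.range K, g k := by
    intro K
    induction K with
    | zero => simp
    | succ K ih =>
      have h1 : 2 ^ t ≤ 2 ^ (t + K) := Nat.pow_le_pow_right (by norm_num) (by omega)
      have hsplit : 2 ^ (t + (K + 1)) - 2 ^ t = (2 ^ (t + K) - 2 ^ t) + 2 ^ (t + K) := by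
        have e : 2 ^ (t + (K + 1)) = 2 ^ (t + K) + 2 ^ (t + K) := by ring
        omega
      rw [hsplit, Finset.sum_range_add]
      have hb : ∑ i ∈ Finset.range (2 ^ (t + K)), a (2 ^ t + ((2 ^ (t + K) - 2 ^ t) + i))
          ≤ (2:ℝ) ^ t * g K := by
        have h2 : ∀ i ∈ Finset.range (2 ^ (t + K)), a (2 ^ (t + K) + i) ≤ a (2 ^ (t + K)) :=
          fun i _ => amono' hmono _ _ Nat.one_le_two_pow (by omega)
        calc ∑ i ∈ Finset.range (2 ^ (t + K)), a (2 ^ t + ((2 ^ (t + K) - 2 ^ t) + i))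
            = ∑ i ∈ Finset.range (2 ^ (t + K)), a (2 ^ (t + K) + i) :=
              Finset.sum_congr rfl (fun i _ => by congr 1; omega)
          _ ≤ ∑ _i ∈ Finset.range (2 ^ (t + K)), a (2 ^ (t + K)) := Finset.sum_le_sum h2
          _ = (2:ℝ) ^ (t + K) * a (2 ^ (t + K)) := hconst (t + K) _
          _ = (2:ℝ) ^ t * g K := by rw [hg]; simp only []; rw [pow_add]; ring
      rw [Finset.sum_range_succ, mul_add]
      exact add_le_add ih hb
  have hx_le : xseq a (2 ^ t) ≤ (2:ℝ) ^ t * ∑' k, g k := by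
    refine Summable.tsum_le_of_sum_range_le (xsummable hsumm Nat.one_le_two_pow) ?_
    intro N
    have hKN : N ≤ 2 ^ (t + N) - 2 ^ t := by
      have e1 : 2 ^ (t + N) = 2 ^ t * 2 ^ N := by rw [pow_add]
      have e2 : N + 1 ≤ 2 ^ N := Nat.lt_two_pow_self (n := N)
      have e3 : 2 ^ t * (N + 1) ≤ 2 ^ t * 2 ^ N := Nat.mul_le_mul_left _ e2
      have e5 : 2 ^ t * (N + 1) = 2 ^ t * N + 2 ^ t := by ring
      have e6 : N ≤ 2 ^ t * N := Nat.le_mul_of_pos_left N (by positivity)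
      omega
    calc ∑ i ∈ Finset.range N, a (2 ^ t + i)
        ≤ ∑ i ∈ Finset.range (2 ^ (t + N) - 2 ^ t), a (2 ^ t + i) :=
          Finset.sum_le_sum_of_subset_of_nonneg (Finset.range_subset_range.2 hKN)
            (fun i _ _ => (hpos _ (by omega)).le)
      _ ≤ (2:ℝ) ^ t * ∑ k ∈ Finset.range N, g k := hblk N
      _ ≤ (2:ℝ) ^ t * ∑' k, g k := by
          refine mul_le_mul_of_nonneg_left ?_ (by positivity)
          exact Summable.sum_le_tsum _ (fun k _ => hg_nonneg k) hg_summable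
  have h2tR : (0:ℝ) < 2 ^ t := by positivity
  rw [sseq, div_le_iff₀ h2tR]
  calc xseq a (2 ^ t) ≤ (2:ℝ) ^ t * ∑' k, g k := hx_le
    _ ≤ (2:ℝ) ^ t * clen a m₀ := mul_le_mul_of_nonneg_left hgs_le (by positivity)
    _ = clen a m₀ * 2 ^ t := by ring

end I4

section Geometry
variable {a : ℕ → ℝ}

lemma lft_two_mul {m : ℕ} (hm : 1 ≤ m) : lft a (2 * m) = lft a m := by
  obtain ⟨n, hn⟩ : ∃ n, 2 * m = n + 2 := ⟨2 * m - 2, by omega⟩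
  rw [hn, lft]
  have h1 : (n + 2) % 2 = 0 := by omega
  have h2 : (n + 2) / 2 = m := by omega
  rw [if_pos h1, h2]

lemma lft_odd {m : ℕ} (hm : 1 ≤ m) :
    lft a (2 * m + 1) = lft a m + clen a (2 * m) + a m := by
  obtain ⟨n, hn⟩ : ∃ n, 2 * m + 1 = n + 2 := ⟨2 * m - 1, by omega⟩
  rw [hn, lft]
  have h1 : ¬ (n + 2) % 2 = 0 := by omega
  have h2 : (n + 2) / 2 = m := by omega
  have h3 : n + 1 = 2 * m := by omega
  rw [if_neg h1, h2, h3]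

lemma lft_gap (hpos : ∀ n ≥ 1, 0 < a n) (hsumm : Summable fun n => a (n + 1)) :
    ∀ n : ℕ, 1 ≤ n → ∀ j : ℕ, 2 ^ n ≤ j → j + 1 < 2 ^ (n + 1) →
      lft a j + clen a j < lft a (j + 1) := by
  intro n
  induction n with
  | zero => intro h; exact absurd h (by norm_num)
  | succ n ih =>
    intro _ j hj1 hj2
    have e1 : 2 ^ (n + 1) = 2 * 2 ^ n := by ring
    have e2 : 2 ^ (n + 2) = 2 * 2 ^ (n + 1) := by ring
    rcases Nat.even_or_odd j with he | ho
    · obtain ⟨m, hm⟩ := he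
      have hj : j = 2 * m := by omega
      have hm1 : 1 ≤ m := by
        have := Nat.one_le_two_pow (n := n + 1); omega
      rw [hj, lft_two_mul hm1, show 2 * m + 1 = 2 * m + 1 from rfl, lft_odd hm1]
      have := hpos m hm1
      linarith
    · obtain ⟨m, hm⟩ := ho
      rcases Nat.eq_zero_or_pos n with rfl | hn1
      · omega
      · have hm1 : 2 ^ n ≤ m := by omega
        have hm0 : 1 ≤ m := le_trans Nat.one_le_two_pow hm1
        have hm2 : m + 1 < 2 ^ (n + 1) := by omega
        have hIH := ih hn1 m hm1 hm2
        have hrec := clen_rec hpos hsumm hm0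
        rw [hm, show 2 * m + 1 + 1 = 2 * (m + 1) by ring, lft_two_mul (by omega), lft_odd hm0]
        linarith

lemma lft_mono (hpos : ∀ n ≥ 1, 0 < a n) (hsumm : Summable fun n => a (n + 1))
    {n : ℕ} (hn : 1 ≤ n) : ∀ j' j : ℕ, 2 ^ n ≤ j → j ≤ j' → j' < 2 ^ (n + 1) →
    lft a j ≤ lft a j' := by
  intro j'
  induction j' with
  | zero => intro j h1 h2 _; have := Nat.one_le_two_pow (n := n); omega
  | succ p ih =>
    intro j h1 h2 h3
    rcases Nat.lt_or_ge j (p + 1) with h | h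
    · have hp1 : 2 ^ n ≤ p := by omega
      have hpge : 1 ≤ p := le_trans Nat.one_le_two_pow hp1
      have hgap := lft_gap hpos hsumm n hn p hp1 (by omega)
      have hc := clen_nonneg hpos hpge
      exact le_trans (ih j h1 (by omega) (by omega)) (by linarith)
    · have : j = p + 1 := by omega
      rw [this]

lemma node_child_left (hpos : ∀ n ≥ 1, 0 < a n) (hsumm : Summable fun n => a (n + 1))
    {m : ℕ} (hm : 1 ≤ m) : node a (2 * m) ⊆ node a m := by
  rw [node, node, lft_two_mul hm]
  apply Set.Icc_subset_Icc le_rfl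
  have hrec := clen_rec hpos hsumm hm
  have h1 := clen_nonneg hpos (show 1 ≤ 2 * m + 1 by omega)
  have h2 := (hpos m hm).le
  linarith

lemma node_child_right (hpos : ∀ n ≥ 1, 0 < a n) (hsumm : Summable fun n => a (n + 1))
    {m : ℕ} (hm : 1 ≤ m) : node a (2 * m + 1) ⊆ node a m := by
  rw [node, node, lft_odd hm]
  have hrec := clen_rec hpos hsumm hm
  have h1 := clen_nonneg hpos (show 1 ≤ 2 * m by omega)
  have h2 := (hpos m hm).le
  exact Set.Icc_subset_Icc (by linarith) (by linarith)

lemma node_div (hpos : ∀ n ≥ 1, 0 < a n) (hsumm : Summable fun n => a (n + 1)) :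
    ∀ d m : ℕ, 2 ^ d ≤ m → node a m ⊆ node a (m / 2 ^ d) := by
  intro d
  induction d with
  | zero => intro m _; simp
  | succ d ih =>
    intro m hm
    have h2d : (2:ℕ) ≤ 2 ^ (d + 1) := by
      calc (2:ℕ) = 2 ^ 1 := rfl
      _ ≤ 2 ^ (d + 1) := Nat.pow_le_pow_right (by norm_num) (by omega)
    have hm2 : 2 ≤ m := le_trans h2d hm
    have hstep : node a m ⊆ node a (m / 2) := by
      rcases Nat.even_or_odd m with he | ho
      · obtain ⟨q, hq⟩ := he
        have hq' : m = 2 * q := by omega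
        have hd : m / 2 = q := by omega
        rw [hd, hq']
        exact node_child_left hpos hsumm (by omega)
      · obtain ⟨q, hq⟩ := ho
        have hd : m / 2 = q := by omega
        rw [hd, hq]
        exact node_child_right hpos hsumm (by omega)
    have hdiv : m / 2 / 2 ^ d = m / 2 ^ (d + 1) := by
      rw [Nat.div_div_eq_div_mul]; congr 1; ring
    have hle : 2 ^ d ≤ m / 2 := by
      rw [Nat.le_div_iff_mul_le (by norm_num)]
      calc 2 ^ d * 2 = 2 ^ (d + 1) := by ring
      _ ≤ m := hm
    refine hstep.trans ?_
    rw [← hdiv]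
    exact ih (m / 2) hle

lemma lft_mul_pow {m : ℕ} (hm : 1 ≤ m) : ∀ d : ℕ, lft a (m * 2 ^ d) = lft a m := by
  intro d
  induction d with
  | zero => simp
  | succ d ih =>
    have h1 : 1 ≤ m * 2 ^ d := Nat.mul_le_mul hm Nat.one_le_two_pow
    rw [show m * 2 ^ (d + 1) = 2 * (m * 2 ^ d) by ring, lft_two_mul h1, ih]

lemma lft_mem_node (hpos : ∀ n ≥ 1, 0 < a n) {m : ℕ} (hm : 1 ≤ m) :
    lft a m ∈ node a m := by
  rw [node, Set.mem_Icc]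
  exact ⟨le_rfl, le_add_of_nonneg_right (clen_nonneg hpos hm)⟩

lemma lft_mem_cantor (hpos : ∀ n ≥ 1, 0 < a n) (hsumm : Summable fun n => a (n + 1))
    {T m : ℕ} (h1 : 2 ^ T ≤ m) (h2 : m < 2 ^ (T + 1)) :
    lft a m ∈ cantorSetOf a := by
  rw [cantorSetOf, Set.mem_iInter]
  intro n
  have hm1 : 1 ≤ m := le_trans Nat.one_le_two_pow h1
  have key : ∃ q : ℕ, 2 ^ n ≤ q ∧ q < 2 ^ (n + 1) ∧ lft a m ∈ node a q := by
    rcases le_or_gt T n with h | h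
    · refine ⟨m * 2 ^ (n - T), ?_, ?_, ?_⟩
      · calc 2 ^ n = 2 ^ T * 2 ^ (n - T) := by rw [← pow_add]; congr 1; omega
        _ ≤ m * 2 ^ (n - T) := Nat.mul_le_mul_right _ h1
      · have e : 2 ^ (T + 1) * 2 ^ (n - T) = 2 ^ (n + 1) := by rw [← pow_add]; congr 1; omega
        have h3 : m * 2 ^ (n - T) < 2 ^ (T + 1) * 2 ^ (n - T) :=
          Nat.mul_lt_mul_of_lt_of_le h2 le_rfl (by positivity)
        omega
      · rw [node, lft_mul_pow hm1, Set.mem_Icc]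
        refine ⟨le_rfl, le_add_of_nonneg_right (clen_nonneg hpos ?_)⟩
        exact Nat.mul_le_mul hm1 Nat.one_le_two_pow
    · refine ⟨m / 2 ^ (T - n), ?_, ?_, ?_⟩
      · rw [Nat.le_div_iff_mul_le (by positivity)]
        calc 2 ^ n * 2 ^ (T - n) = 2 ^ T := by rw [← pow_add]; congr 1; omega
        _ ≤ m := h1
      · rw [Nat.div_lt_iff_lt_mul (by positivity)]
        calc m < 2 ^ (T + 1) := h2
        _ ≤ 2 ^ (n + 1) * 2 ^ (T - n) := by rw [← pow_add]; apply Nat.pow_le_pow_right (by norm_num); omega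
      · refine node_div hpos hsumm (T - n) m ?_ (lft_mem_node hpos hm1)
        calc 2 ^ (T - n) ≤ 2 ^ T := Nat.pow_le_pow_right (by norm_num) (by omega)
        _ ≤ m := h1
  obtain ⟨q, hq1, hq2, hq3⟩ := key
  rw [Set.mem_iUnion₂]
  refine ⟨q - 2 ^ n + 1, ?_, ?_⟩
  · rw [Finset.mem_Icc]; omega
  · have he : 2 ^ n + (q - 2 ^ n + 1) - 1 = q := by omega
    rw [he]; exact hq3

end Geometry

section Counting
variable {a : ℕ → ℝ}

open Classical in
lemma count_level (hpos : ∀ n ≥ 1, 0 < a n) (hmono : ∀ n ≥ 1, a (n + 1) ≤ a n)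
    (hsumm : Summable fun n => a (n + 1)) {t : ℕ} (ht : 1 ≤ t) (U : Set ℝ)
    (hb : Bornology.IsBounded U) (hU : Metric.diam U ≤ sseq a t) :
    ((Finset.Ico (2 ^ (t - 1)) (2 ^ t)).filter (fun m => (U ∩ node a m).Nonempty)).card ≤ 2 := by
  by_contra hcon
  push_neg at hcon
  set K := (Finset.Ico (2 ^ (t - 1)) (2 ^ t)).filter (fun m => (U ∩ node a m).Nonempty) with hK
  have hKcard : 3 ≤ K.card := hcon
  have hKIco : ∀ z ∈ K, 2 ^ (t - 1) ≤ z ∧ z < 2 ^ t ∧ (U ∩ node a z).Nonempty := by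
    intro z hz
    rw [hK, Finset.mem_filter, Finset.mem_Ico] at hz
    exact ⟨hz.1.1, hz.1.2, hz.2⟩
  rcases Nat.lt_or_ge t 2 with ht2 | ht2
  · have h1 : t = 1 := by omega
    have h2 : K ⊆ Finset.Ico (2 ^ (t - 1)) (2 ^ t) := Finset.filter_subset _ _
    have h3 := Finset.card_le_card h2
    rw [Nat.card_Ico, h1] at h3
    norm_num at h3
    omega
  · have hn1 : 1 ≤ t - 1 := by omega
    have htn : t = (t - 1) + 1 := by omega
    have hKne : K.Nonempty := Finset.card_pos.1 (by omega)
    set A := K.min' hKne with hA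
    set B := K.max' hKne with hB
    have hAK : A ∈ K := K.min'_mem hKne
    have hBK : B ∈ K := K.max'_mem hKne
    have hcard' : 1 ≤ ((K.erase A).erase B).card := by
      have h1 : K.card - 1 ≤ (K.erase A).card := Finset.pred_card_le_card_erase
      have h2 : (K.erase A).card - 1 ≤ ((K.erase A).erase B).card :=
        Finset.pred_card_le_card_erase
      omega
    obtain ⟨M, hM⟩ := (Finset.card_pos (s := (K.erase A).erase B)).1 (by omega)
    have hMB : M ≠ B := (Finset.mem_erase.1 hM).1
    have hMA : M ≠ A := (Finset.mem_erase.1 (Finset.mem_erase.1 hM).2).1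
    have hMK : M ∈ K := Finset.mem_of_mem_erase (Finset.mem_of_mem_erase hM)
    have hAM : A < M := lt_of_le_of_ne (K.min'_le M hMK) (Ne.symm hMA)
    have hMBlt : M < B := lt_of_le_of_ne (K.le_max' M hMK) hMB
    obtain ⟨hA1, hA2, pU, hpU, hpn⟩ :
        2 ^ (t-1) ≤ A ∧ A < 2 ^ t ∧ ∃ p, p ∈ U ∧ p ∈ node a A := by
      obtain ⟨u1, u2, x, hx⟩ := hKIco A hAK
      exact ⟨u1, u2, x, hx.1, hx.2⟩
    obtain ⟨hB1, hB2, qU, hqU, hqn⟩ :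
        2 ^ (t-1) ≤ B ∧ B < 2 ^ t ∧ ∃ q, q ∈ U ∧ q ∈ node a B := by
      obtain ⟨u1, u2, x, hx⟩ := hKIco B hBK
      exact ⟨u1, u2, x, hx.1, hx.2⟩
    obtain ⟨hM1, hM2, -⟩ := hKIco M hMK
    have hM0 : 1 ≤ M := le_trans Nat.one_le_two_pow hM1
    rw [node, Set.mem_Icc] at hpn hqn
    have hBled : B < 2 ^ ((t-1) + 1) := by rw [show (t-1)+1 = t by omega]; exact hB2
    have c1 : lft a A + clen a A < lft a (A + 1) :=
      lft_gap hpos hsumm (t-1) hn1 A hA1 (by omega)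
    have c2 : lft a (A + 1) ≤ lft a M :=
      lft_mono hpos hsumm hn1 M (A + 1) (by omega) (by omega) (by omega)
    have c3 : lft a M + clen a M < lft a (M + 1) :=
      lft_gap hpos hsumm (t-1) hn1 M hM1 (by omega)
    have c4 : lft a (M + 1) ≤ lft a B :=
      lft_mono hpos hsumm hn1 B (M + 1) (by omega) (by omega) (by omega)
    have c5 : sseq a t ≤ clen a M := by
      refine le_trans (s_le_clen hpos hmono hsumm (by omega)) ?_
      exact clen_anti hpos hmono hsumm hM0 (by omega)
    have hdist : dist qU pU ≤ sseq a t :=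
      le_trans (Metric.dist_le_diam_of_mem hb hqU hpU) hU
    rw [Real.dist_eq] at hdist
    have habs : qU - pU ≤ |qU - pU| := le_abs_self _
    have hclenA : 0 ≤ clen a A := clen_nonneg hpos (le_trans Nat.one_le_two_pow hA1)
    linarith [hpn.2, hqn.1]

open Classical in
lemma count_levelT (hpos : ∀ n ≥ 1, 0 < a n) (hmono : ∀ n ≥ 1, a (n + 1) ≤ a n)
    (hsumm : Summable fun n => a (n + 1)) {t T : ℕ} (ht : 1 ≤ t) (htT : t ≤ T + 1) (U : Set ℝ)
    (hb : Bornology.IsBounded U) (hU : Metric.diam U ≤ sseq a t) :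
    ((Finset.Ico (2 ^ T) (2 ^ (T + 1))).filter (fun m => (U ∩ node a m).Nonempty)).card
      ≤ 2 * 2 ^ (T + 1 - t) := by
  set d := T + 1 - t with hd
  set J := (Finset.Ico (2 ^ T) (2 ^ (T + 1))).filter (fun m => (U ∩ node a m).Nonempty) with hJ
  set f : ℕ → ℕ := fun m => m / 2 ^ d with hf
  have hfiber : ∀ b ∈ J.image f, (J.filter (fun m => f m = b)).card ≤ 2 ^ d := by
    intro b _
    have hsub : J.filter (fun m => f m = b) ⊆ Finset.Ico (b * 2 ^ d) (b * 2 ^ d + 2 ^ d) := by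
      intro m hm
      rw [Finset.mem_filter] at hm
      have hfm : m / 2 ^ d = b := hm.2
      rw [Finset.mem_Ico, ← hfm]
      constructor
      · exact Nat.div_mul_le_self m (2 ^ d)
      · have h1 : m / 2 ^ d < m / 2 ^ d + 1 := Nat.lt_succ_self _
        have h2 : m < (m / 2 ^ d + 1) * 2 ^ d := (Nat.div_lt_iff_lt_mul (by positivity)).1 h1
        calc m < (m / 2 ^ d + 1) * 2 ^ d := h2
        _ = m / 2 ^ d * 2 ^ d + 2 ^ d := by ring
    calc (J.filter (fun m => f m = b)).card ≤ (Finset.Ico (b * 2 ^ d) (b * 2 ^ d + 2 ^ d)).card :=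
        Finset.card_le_card hsub
    _ = 2 ^ d := by rw [Nat.card_Ico, Nat.add_sub_cancel_left]
  have hmain := Finset.card_le_mul_card_image J (2 ^ d) hfiber
  have himg : J.image f ⊆
      (Finset.Ico (2 ^ (t - 1)) (2 ^ t)).filter (fun m => (U ∩ node a m).Nonempty) := by
    intro b hb'
    rw [Finset.mem_image] at hb'
    obtain ⟨m, hmJ, rfl⟩ := hb'
    rw [hJ, Finset.mem_filter, Finset.mem_Ico] at hmJ
    obtain ⟨⟨hm1, hm2⟩, hne⟩ := hmJ
    have ed1 : (t - 1) + d = T := by omega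
    have ed2 : t + d = T + 1 := by omega
    rw [Finset.mem_filter, Finset.mem_Ico]
    refine ⟨⟨?_, ?_⟩, ?_⟩
    · rw [hf]
      rw [Nat.le_div_iff_mul_le (by positivity)]
      calc 2 ^ (t - 1) * 2 ^ d = 2 ^ T := by rw [← pow_add, ed1]
      _ ≤ m := hm1
    · rw [hf]
      rw [Nat.div_lt_iff_lt_mul (by positivity)]
      calc m < 2 ^ (T + 1) := hm2
      _ = 2 ^ t * 2 ^ d := by rw [← pow_add, ed2]
    · obtain ⟨x, hxU, hxn⟩ := hne
      refine ⟨x, hxU, node_div hpos hsumm d m ?_ hxn⟩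
      calc 2 ^ d ≤ 2 ^ T := Nat.pow_le_pow_right (by norm_num) (by omega)
      _ ≤ m := hm1
  have h2 : (J.image f).card ≤ 2 :=
    le_trans (Finset.card_le_card himg) (count_level hpos hmono hsumm ht U hb hU)
  calc J.card ≤ 2 ^ d * (J.image f).card := hmain
  _ ≤ 2 ^ d * 2 := Nat.mul_le_mul_left _ h2
  _ = 2 * 2 ^ d := by ring

end Counting

section Key
variable {a : ℕ → ℝ}

lemma key_pow2 (hpos : ∀ n ≥ 1, 0 < a n) (hsumm : Summable fun n => a (n + 1))
    (htot : ∑' n : ℕ, a (n + 1) = 1)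
    {ρk : ℕ} (hρ1 : 1 ≤ ρk) {s' : ℝ} (hs' : 0 < s')
    (hlt : s' < (-(ρk : ℝ) * Real.log 2) / Real.log (sseq a ρk))
    {m : ℕ} (hm : 1 ≤ m)
    (hmin : sseq a ρk ^ (1 / (ρk : ℝ)) ≤ sseq a m ^ (1 / (m : ℝ))) :
    ((1:ℝ)/2) ^ m < sseq a m ^ s' := by
  have hρ0 : ((ρk:ℝ)) ≠ 0 := Nat.cast_ne_zero.2 (by omega)
  have hm0 : ((m:ℝ)) ≠ 0 := Nat.cast_ne_zero.2 (by omega)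
  set sρ := sseq a ρk with hsρdef
  have hsρ : 0 < sρ := s_pos hpos hsumm ρk
  have hsρ1 : sρ < 1 := by
    have h1 := s_le hpos hsumm htot ρk
    have h2 : ((1:ℝ)/2) ^ ρk ≤ ((1:ℝ)/2) ^ 1 :=
      pow_le_pow_of_le_one (by norm_num) (by norm_num) hρ1
    norm_num at h2
    linarith
  have hL : Real.log sρ < 0 := Real.log_neg hsρ hsρ1
  have hlt2 : -(ρk:ℝ) * Real.log 2 < s' * Real.log sρ :=
    (lt_div_iff_of_neg hL).1 hlt
  have key1 : (2:ℝ) ^ (-(ρk:ℝ)) < sρ ^ s' := by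
    rw [Real.rpow_def_of_pos (by norm_num : (0:ℝ) < 2), Real.rpow_def_of_pos hsρ]
    refine Real.exp_lt_exp.2 ?_
    have e : Real.log 2 * (-(ρk:ℝ)) = -(ρk:ℝ) * Real.log 2 := mul_comm _ _
    have e' : Real.log sρ * s' = s' * Real.log sρ := mul_comm _ _
    rw [e, e']; exact hlt2
  have hmρ : (0:ℝ) < (m:ℝ)/(ρk:ℝ) := by
    apply div_pos
    · exact_mod_cast Nat.pos_of_ne_zero (by omega)
    · exact_mod_cast Nat.pos_of_ne_zero (by omega)
  have hsm : 0 < sseq a m := s_pos hpos hsumm m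
  have hstep : sρ ^ ((m:ℝ)/(ρk:ℝ)) ≤ sseq a m := by
    have h1 : (sρ ^ ((1:ℝ)/(ρk:ℝ))) ^ (m:ℝ) ≤ (sseq a m ^ ((1:ℝ)/(m:ℝ))) ^ (m:ℝ) :=
      Real.rpow_le_rpow (Real.rpow_nonneg hsρ.le _) hmin (by positivity)
    rw [← Real.rpow_mul hsρ.le, ← Real.rpow_mul hsm.le] at h1
    have e1 : (1:ℝ)/(m:ℝ) * (m:ℝ) = 1 := by field_simp
    rw [e1, Real.rpow_one] at h1
    have e2 : (1:ℝ)/(ρk:ℝ) * (m:ℝ) = (m:ℝ)/(ρk:ℝ) := by ring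
    rwa [e2] at h1
  have h3 : (2:ℝ) ^ (-(m:ℝ)) < sseq a m ^ s' := by
    have h4 : ((2:ℝ) ^ (-(ρk:ℝ))) ^ ((m:ℝ)/(ρk:ℝ)) < (sρ ^ s') ^ ((m:ℝ)/(ρk:ℝ)) :=
      Real.rpow_lt_rpow (Real.rpow_nonneg (by norm_num) _) key1 hmρ
    have e3 : ((2:ℝ) ^ (-(ρk:ℝ))) ^ ((m:ℝ)/(ρk:ℝ)) = (2:ℝ) ^ (-(m:ℝ)) := by
      rw [← Real.rpow_mul (by norm_num : (0:ℝ) ≤ 2)]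
      congr 1
      field_simp
    have e4 : (sρ ^ s') ^ ((m:ℝ)/(ρk:ℝ)) = (sρ ^ ((m:ℝ)/(ρk:ℝ))) ^ s' := by
      rw [← Real.rpow_mul hsρ.le, ← Real.rpow_mul hsρ.le]
      ring_nf
    have h5 : (sρ ^ ((m:ℝ)/(ρk:ℝ))) ^ s' ≤ sseq a m ^ s' :=
      Real.rpow_le_rpow (Real.rpow_nonneg hsρ.le _) hstep hs'.le
    rw [e3, e4] at h4
    linarith
  have e5 : ((1:ℝ)/2) ^ m = (2:ℝ) ^ (-(m:ℝ)) := by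
    rw [Real.rpow_neg (by norm_num), Real.rpow_natCast, one_div, inv_pow]
  rw [e5]; exact h3

end Key


/-- If `s' < (-ρ(k') log 2)/(log s_{ρ(k')})` with `ρ(k')` the minimizer of `s_m^{1/m}`
over `m ∈ [k', γ_θ(k') + 1]`, then every finite cover of `C_a` by sets of diameters in
`[s_{k'}^{1/θ}, s_{k'}]` has `s'`-cost at least `1/16`. -/
theorem cover_cost_lower_bound (a : ℕ → ℝ) (hpos : ∀ n ≥ 1, 0 < a n) (hmono : ∀ n ≥ 1, a (n + 1) ≤ a n)
    (hsumm : Summable fun n => a (n + 1)) (htot : ∑' n : ℕ, a (n + 1) = 1)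
    (θ : ℝ) (hθ : θ ∈ Set.Ioc (0:ℝ) 1) (k' ρk : ℕ)
    (hρmem : ρk ∈ Finset.Icc k' (gammaIdx a θ k' + 1))
    (hρmin : ∀ m ∈ Finset.Icc k' (gammaIdx a θ k' + 1),
      sseq a ρk ^ (1 / (ρk : ℝ)) ≤ sseq a m ^ (1 / (m : ℝ)))
    (s' : ℝ) (hs' : 0 < s')
    (hlt : s' < (-(ρk : ℝ) * Real.log 2) / Real.log (sseq a ρk))
    (I : Finset ℕ) (U : ℕ → Set ℝ)
    (hcover : cantorSetOf a ⊆ ⋃ i ∈ I, U i)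
    (hdiam : ∀ i ∈ I,
      sseq a k' ^ (1 / θ) ≤ Metric.diam (U i) ∧ Metric.diam (U i) ≤ sseq a k') :
    1 / 16 ≤ ∑ i ∈ I, Metric.diam (U i) ^ s' := by
  classical
  set γ := gammaIdx a θ k' with hγdef
  set c := sseq a k' ^ (1 / θ) with hcdef
  have hsk' : 0 < sseq a k' := s_pos hpos hsumm k'
  have hθ0 : 0 < θ := hθ.1
  have hc : 0 < c := Real.rpow_pos_of_pos hsk' _
  -- k' belongs to the gamma set
  have hsk1 : sseq a k' ≤ 1 := by
    have h1 := s_le hpos hsumm htot k'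
    have h2 : ((1:ℝ)/2) ^ k' ≤ 1 := pow_le_one₀ (by norm_num) (by norm_num)
    linarith
  have hsetmem : k' ∈ {m : ℕ | sseq a k' ^ (1 / θ) ≤ sseq a m} := by
    have h1 : sseq a k' ^ (1 / θ) ≤ sseq a k' ^ (1:ℝ) :=
      Real.rpow_le_rpow_of_exponent_ge hsk' hsk1 (by
        rw [le_div_iff₀ hθ0, one_mul]; exact hθ.2)
    rw [Real.rpow_one] at h1
    exact h1
  have hbdd : BddAbove {m : ℕ | sseq a k' ^ (1 / θ) ≤ sseq a m} := by
    obtain ⟨M, hM⟩ := exists_pow_lt_of_lt_one hc (show (1:ℝ)/2 < 1 by norm_num)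
    refine ⟨M, fun m hm => ?_⟩
    by_contra hmM
    push_neg at hmM
    have h1 : sseq a m ≤ ((1:ℝ)/2) ^ m := s_le hpos hsumm htot m
    have h2 : ((1:ℝ)/2) ^ m ≤ ((1:ℝ)/2) ^ M :=
      pow_le_pow_of_le_one (by norm_num) (by norm_num) (by omega)
    have h3 : c ≤ sseq a m := hm
    linarith
  have hk'γ : k' ≤ γ := le_csSup hbdd hsetmem
  have hγ1 : sseq a (γ + 1) < c := by
    by_contra h
    push_neg at h
    have h2 : γ + 1 ≤ γ := le_csSup hbdd (by rw [← hcdef]; exact h)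
    omega
  rw [Finset.mem_Icc] at hρmem
  rcases Nat.eq_zero_or_pos ρk with hρ0 | hρ1
  · exfalso
    rw [hρ0] at hlt
    norm_num at hlt
    linarith
  -- diameters are positive and sets bounded
  have hdpos : ∀ i ∈ I, 0 < Metric.diam (U i) := fun i hi =>
    lt_of_lt_of_le hc (by rw [hcdef]; exact (hdiam i hi).1)
  have hbnd : ∀ i ∈ I, Bornology.IsBounded (U i) := by
    intro i hi
    by_contra hnb
    have := Metric.diam_eq_zero_of_unbounded hnb
    have := hdpos i hi
    linarith
  -- choice of levels
  set tfun : ℕ → ℕ :=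
    fun i => sSup {t : ℕ | k' ≤ t ∧ t ≤ γ ∧ Metric.diam (U i) ≤ sseq a t} with htfdef
  have htfun : ∀ i ∈ I, k' ≤ tfun i ∧ tfun i ≤ γ ∧ Metric.diam (U i) ≤ sseq a (tfun i) := by
    intro i hi
    have hne : k' ∈ {t : ℕ | k' ≤ t ∧ t ≤ γ ∧ Metric.diam (U i) ≤ sseq a t} :=
      ⟨le_rfl, hk'γ, (hdiam i hi).2⟩
    have hbd : BddAbove {t : ℕ | k' ≤ t ∧ t ≤ γ ∧ Metric.diam (U i) ≤ sseq a t} :=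
      ⟨γ, fun t ht => ht.2.1⟩
    exact Nat.sSup_mem ⟨k', hne⟩ hbd
  have hnext : ∀ i ∈ I, sseq a (tfun i + 1) ≤ Metric.diam (U i) := by
    intro i hi
    rcases Nat.lt_or_ge (tfun i) γ with h | h
    · by_contra hcon
      push_neg at hcon
      have hmem2 : tfun i + 1 ∈ {t : ℕ | k' ≤ t ∧ t ≤ γ ∧ Metric.diam (U i) ≤ sseq a t} :=
        ⟨by have := (htfun i hi).1; omega, by omega, hcon.le⟩
      have h2 : tfun i + 1 ≤ tfun i :=
        le_csSup ⟨γ, fun t ht => ht.2.1⟩ hmem2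
      omega
    · have heq : tfun i = γ := le_antisymm (htfun i hi).2.1 h
      calc sseq a (tfun i + 1) = sseq a (γ + 1) := by rw [heq]
      _ ≤ c := hγ1.le
      _ ≤ Metric.diam (U i) := by rw [hcdef]; exact (hdiam i hi).1
  -- key power estimate per i
  have hkey : ∀ i ∈ I, ((1:ℝ)/2) * ((1:ℝ)/2) ^ (tfun i) ≤ Metric.diam (U i) ^ s' := by
    intro i hi
    have hmem2 : tfun i + 1 ∈ Finset.Icc k' (γ + 1) :=
      Finset.mem_Icc.2 ⟨by have := (htfun i hi).1; omega, by have := (htfun i hi).2.1; omega⟩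
    have h2 := key_pow2 hpos hsumm htot hρ1 hs' hlt (by omega : 1 ≤ tfun i + 1)
      (hρmin _ hmem2)
    have h3 : sseq a (tfun i + 1) ^ s' ≤ Metric.diam (U i) ^ s' :=
      Real.rpow_le_rpow (s_pos hpos hsumm _).le (hnext i hi) hs'.le
    have e : ((1:ℝ)/2) ^ (tfun i + 1) = ((1:ℝ)/2) * ((1:ℝ)/2) ^ (tfun i) := by
      rw [pow_succ]; ring
    rw [← e]
    exact le_trans h2.le h3
  -- counting at level T
  set T := I.sup tfun with hTdef
  set J := Finset.Ico (2 ^ T) (2 ^ (T + 1)) with hJdef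
  have hJcover : ∀ m ∈ J, ∃ i ∈ I, (U i ∩ node a m).Nonempty := by
    intro m hm
    rw [hJdef, Finset.mem_Ico] at hm
    have hx := lft_mem_cantor hpos hsumm hm.1 hm.2
    obtain ⟨i, hi, hxi⟩ := Set.mem_iUnion₂.1 (hcover hx)
    exact ⟨i, hi, lft a m, hxi, lft_mem_node hpos (le_trans Nat.one_le_two_pow hm.1)⟩
  have hsubJ : J ⊆ I.biUnion (fun i => J.filter (fun m => (U i ∩ node a m).Nonempty)) := by
    intro m hm
    obtain ⟨i, hi, hne⟩ := hJcover m hm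
    exact Finset.mem_biUnion.2 ⟨i, hi, Finset.mem_filter.2 ⟨hm, hne⟩⟩
  have hcount : (2:ℕ) ^ T ≤ ∑ i ∈ I, (J.filter (fun m => (U i ∩ node a m).Nonempty)).card := by
    have h1 : J.card = 2 ^ T := by
      rw [hJdef, Nat.card_Ico]
      have e : 2 ^ (T + 1) = 2 * 2 ^ T := by ring
      omega
    calc (2:ℕ) ^ T = J.card := h1.symm
    _ ≤ (I.biUnion (fun i => J.filter (fun m => (U i ∩ node a m).Nonempty))).card :=
        Finset.card_le_card hsubJ
    _ ≤ ∑ i ∈ I, (J.filter (fun m => (U i ∩ node a m).Nonempty)).card :=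
        Finset.card_biUnion_le
  have hper : ∀ i ∈ I, (J.filter (fun m => (U i ∩ node a m).Nonempty)).card
      ≤ 2 * 2 ^ (T + 1 - tfun i) := by
    intro i hi
    have hle : tfun i ≤ T := Finset.le_sup hi
    rcases Nat.eq_zero_or_pos (tfun i) with h0 | h1
    · have hsub : (J.filter (fun m => (U i ∩ node a m).Nonempty)).card ≤ J.card :=
        Finset.card_le_card (Finset.filter_subset _ _)
      have h2 : J.card = 2 ^ T := by
        rw [hJdef, Nat.card_Ico]
        have e : 2 ^ (T + 1) = 2 * 2 ^ T := by ring
        omega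
      rw [h0, Nat.sub_zero]
      have e : 2 ^ (T + 1) = 2 * 2 ^ T := by ring
      omega
    · exact count_levelT hpos hmono hsumm h1 (by omega) (U i) (hbnd i hi) (htfun i hi).2.2
  -- cast to the reals
  have hcast : ∀ i ∈ I, ((2:ℝ) * 2 ^ (T + 1 - tfun i)) = 4 * 2 ^ T * ((1:ℝ)/2) ^ (tfun i) := by
    intro i hi
    have hle : tfun i ≤ T := Finset.le_sup hi
    have h2 : (2:ℝ) ^ (T + 1 - tfun i) * 2 ^ (tfun i) = 2 ^ (T + 1) := by
      rw [← pow_add]; congr 1; omega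
    have h3 : (0:ℝ) < 2 ^ (tfun i) := by positivity
    calc (2:ℝ) * 2 ^ (T + 1 - tfun i)
        = (2 * 2 ^ (T + 1 - tfun i) * 2 ^ (tfun i)) / 2 ^ (tfun i) := by field_simp
    _ = (2 * 2 ^ (T + 1)) / 2 ^ (tfun i) := by rw [mul_assoc, h2]
    _ = 4 * 2 ^ T * ((1:ℝ)/2) ^ (tfun i) := by
        rw [pow_succ, one_div, inv_pow]; ring
  have hcountR : ((2:ℝ)) ^ T ≤ ∑ i ∈ I, (4 * 2 ^ T * ((1:ℝ)/2) ^ (tfun i)) := by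
    have h1 : ((2:ℝ)) ^ T ≤ ∑ i ∈ I,
        ((J.filter (fun m => (U i ∩ node a m).Nonempty)).card : ℝ) := by
      have h2 := (Nat.cast_le (α := ℝ)).2 hcount
      push_cast at h2
      exact h2
    refine le_trans h1 (Finset.sum_le_sum ?_)
    intro i hi
    have h4 := (Nat.cast_le (α := ℝ)).2 (hper i hi)
    push_cast at h4
    rw [← hcast i hi]
    exact h4
  have hsum14 : (1:ℝ)/4 ≤ ∑ i ∈ I, ((1:ℝ)/2) ^ (tfun i) := by
    have hp : (0:ℝ) < 2 ^ T := by positivity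
    have h1 : ∑ i ∈ I, (4 * 2 ^ T * ((1:ℝ)/2) ^ (tfun i))
        = 4 * 2 ^ T * ∑ i ∈ I, ((1:ℝ)/2) ^ (tfun i) := by
      rw [Finset.mul_sum]
    rw [h1] at hcountR
    have h6 : (1:ℝ)/4 = 2 ^ T / (4 * 2 ^ T) := by field_simp
    rw [h6, div_le_iff₀ (by positivity)]
    have h7 : (∑ i ∈ I, ((1:ℝ)/2) ^ (tfun i)) * (4 * 2 ^ T)
        = 4 * 2 ^ T * ∑ i ∈ I, ((1:ℝ)/2) ^ (tfun i) := by ring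
    rw [h7]
    exact hcountR
  calc (1:ℝ)/16 ≤ (1/2) * ((1:ℝ)/4) := by norm_num
  _ ≤ (1/2) * ∑ i ∈ I, ((1:ℝ)/2) ^ (tfun i) := by
      have : (0:ℝ) < 1/2 := by norm_num
      nlinarith [hsum14]
  _ = ∑ i ∈ I, ((1:ℝ)/2) * ((1:ℝ)/2) ^ (tfun i) := by rw [Finset.mul_sum]
  _ ≤ ∑ i ∈ I, Metric.diam (U i) ^ s' := Finset.sum_le_sum hkey
end

section
/- In the decreasing Cantor set construction from a positive non-increasing summable sequence a, any set U with |U| ≤ s_{t} (where s_{t+1} < |U| ≤ s_t) can intersect at most 4 of the closed intervals of step t−1, and consequently at most 8 of the closed intervals of step t. -/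
open Filter Set Topology

namespace CantorAuxPf

noncomputable def B (a : ℕ → ℝ) (k m : ℕ) : ℝ := ∑ i ∈ Finset.range (2 ^ k), a (2 ^ k * m + i)

lemma clen_eq (a : ℕ → ℝ) (m : ℕ) : clen a m = ∑' k, B a k m := rfl

variable {a : ℕ → ℝ}

lemma amono (hmono : ∀ n ≥ 1, a (n + 1) ≤ a n) :
    ∀ i j : ℕ, 1 ≤ i → i ≤ j → a j ≤ a i := by
  intro i j hi hij
  induction j, hij using Nat.le_induction with
  | base => exact le_refl _
  | succ n hn ih => exact le_trans (hmono n (le_trans hi hn)) ih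

lemma summable_tail (hsumm : Summable fun n => a (n + 1)) {N : ℕ} (hN : 1 ≤ N) :
    Summable fun i => a (N + i) := by
  have h := (summable_nat_add_iff (f := fun n => a (n + 1)) (N - 1)).mpr hsumm
  have he : (fun i => a (N + i)) = fun i => a (i + (N - 1) + 1) := by
    funext i; congr 1; omega
  rw [he]; exact h

lemma xseq_nonneg (hpos : ∀ n ≥ 1, 0 < a n) {N : ℕ} (hN : 1 ≤ N) : 0 ≤ xseq a N :=
  tsum_nonneg fun i => (hpos (N + i) (by omega)).le

lemma B_nonneg (hpos : ∀ n ≥ 1, 0 < a n) {m : ℕ} (hm : 1 ≤ m) (k : ℕ) : 0 ≤ B a k m := by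
  refine Finset.sum_nonneg fun i _ => (hpos _ ?_).le
  have h1 : 1 ≤ 2 ^ k := Nat.one_le_two_pow
  have := Nat.le_mul_of_pos_left m (show 0 < 2 ^ k from h1)
  omega

lemma B_eq_Ico (k m : ℕ) : B a k m = ∑ i ∈ Finset.Ico (2 ^ k * m) (2 ^ k * m + 2 ^ k), a i := by
  rw [Finset.sum_Ico_eq_sum_range]
  simp [B]

lemma partial_le (hpos : ∀ n ≥ 1, 0 < a n) (hsumm : Summable fun n => a (n + 1))
    {m : ℕ} (hm : 1 ≤ m) (K : ℕ) :
    ∑ k ∈ Finset.range K, B a k m ≤ xseq a m := by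
  have key : ∀ k l : ℕ, k < l → 2 ^ k * m + 2 ^ k ≤ 2 ^ l * m := by
    intro k l h
    have h1 : 2 ^ (k + 1) ≤ 2 ^ l := Nat.pow_le_pow_right (by norm_num) h
    have h3 : 2 ^ (k + 1) * m ≤ 2 ^ l * m := Nat.mul_le_mul_right m h1
    have h2 : 2 ^ (k + 1) * m = 2 ^ k * m + 2 ^ k * m := by rw [pow_succ]; ring
    have h4 : 1 ≤ 2 ^ k := Nat.one_le_two_pow
    have h5 : 2 ^ k * 1 ≤ 2 ^ k * m := Nat.mul_le_mul_left _ hm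
    omega
  have hdisj : (↑(Finset.range K) : Set ℕ).PairwiseDisjoint
      (fun k => Finset.Ico (2 ^ k * m) (2 ^ k * m + 2 ^ k)) := by
    intro k _ l _ hkl
    simp only [Function.onFun]
    rw [Finset.disjoint_left]
    intro x hx hx'
    simp only [Finset.mem_Ico] at hx hx'
    rcases Nat.lt_or_ge k l with h | h
    · have := key k l h; omega
    · have hlk : l < k := lt_of_le_of_ne h (Ne.symm hkl)
      have := key l k hlk; omega
  have hsum_eq : ∑ k ∈ Finset.range K, B a k m
      = ∑ i ∈ (Finset.range K).biUnion
          (fun k => Finset.Ico (2 ^ k * m) (2 ^ k * m + 2 ^ k)), a i := by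
    rw [Finset.sum_biUnion hdisj]
    exact Finset.sum_congr rfl fun k _ => B_eq_Ico (a := a) k m
  rw [hsum_eq]
  have hsubset : (Finset.range K).biUnion (fun k => Finset.Ico (2 ^ k * m) (2 ^ k * m + 2 ^ k))
      ⊆ Finset.Ico m (2 ^ K * m + 2 ^ K) := by
    intro x hx
    simp only [Finset.mem_biUnion, Finset.mem_Ico] at hx ⊢
    obtain ⟨k, hk, h1, h2⟩ := hx
    have hkK : 2 ^ k ≤ 2 ^ K := Nat.pow_le_pow_right (by norm_num) (Finset.mem_range.mp hk).le
    have h4 : 1 ≤ 2 ^ k := Nat.one_le_two_pow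
    have h5 : m * 1 ≤ m * 2 ^ k := Nat.mul_le_mul_left _ h4
    have h6 : 2 ^ k * m ≤ 2 ^ K * m := Nat.mul_le_mul_right m hkK
    have h7 : m * 2 ^ k = 2 ^ k * m := by ring
    omega
  have h1 : ∑ i ∈ (Finset.range K).biUnion
        (fun k => Finset.Ico (2 ^ k * m) (2 ^ k * m + 2 ^ k)), a i
      ≤ ∑ i ∈ Finset.Ico m (2 ^ K * m + 2 ^ K), a i := by
    refine Finset.sum_le_sum_of_subset_of_nonneg hsubset fun i hi _ => ?_
    simp only [Finset.mem_Ico] at hi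
    exact (hpos i (by omega)).le
  refine h1.trans ?_
  rw [Finset.sum_Ico_eq_sum_range]
  exact (summable_tail hsumm hm).sum_le_tsum _ (fun i _ => (hpos (m + i) (by omega)).le)

lemma summable_B (hpos : ∀ n ≥ 1, 0 < a n) (hsumm : Summable fun n => a (n + 1))
    {m : ℕ} (hm : 1 ≤ m) : Summable fun k => B a k m :=
  summable_of_sum_range_le (B_nonneg hpos hm) (partial_le hpos hsumm hm)

lemma clen_nonneg (hpos : ∀ n ≥ 1, 0 < a n) {m : ℕ} (hm : 1 ≤ m) : 0 ≤ clen a m := by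
  rw [clen_eq]; exact tsum_nonneg (B_nonneg hpos hm)

lemma B_succ (k m : ℕ) : B a (k + 1) m = B a k (2 * m) + B a k (2 * m + 1) := by
  unfold B
  have hsplit : (2 : ℕ) ^ (k + 1) = 2 ^ k + 2 ^ k := by rw [pow_succ]; ring
  rw [hsplit, ← Finset.sum_range_add_sum_Ico _ (Nat.le_add_right (2 ^ k) (2 ^ k)),
    Finset.sum_Ico_eq_sum_range]
  have h : 2 ^ k + 2 ^ k - 2 ^ k = 2 ^ k := by simp
  rw [h]
  congr 1
  · exact Finset.sum_congr rfl fun i _ => by congr 1; ring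
  · exact Finset.sum_congr rfl fun i _ => by congr 1; ring

lemma clen_rec (hpos : ∀ n ≥ 1, 0 < a n) (hsumm : Summable fun n => a (n + 1))
    {m : ℕ} (hm : 1 ≤ m) : clen a m = a m + clen a (2 * m) + clen a (2 * m + 1) := by
  have hm2 : 1 ≤ 2 * m := by omega
  have hm2' : 1 ≤ 2 * m + 1 := by omega
  rw [clen_eq, (summable_B hpos hsumm hm).tsum_eq_zero_add]
  have h0 : B a 0 m = a m := by simp [B]
  have h1 : ∀ k : ℕ, B a (k + 1) m = B a k (2 * m) + B a k (2 * m + 1) := fun k => B_succ k m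
  rw [h0, tsum_congr h1, (summable_B hpos hsumm hm2).tsum_add (summable_B hpos hsumm hm2'),
    ← clen_eq, ← clen_eq]
  ring

lemma tail_partial (a : ℕ → ℝ) (c K : ℕ) :
    ∑ k ∈ Finset.range K, B a (c + k) 1
      = ∑ i ∈ Finset.range (2 ^ (c + K) - 2 ^ c), a (2 ^ c + i) := by
  induction K with
  | zero => simp
  | succ K ih =>
    have hle : 2 ^ c ≤ 2 ^ (c + K) := Nat.pow_le_pow_right (by norm_num) (by omega)
    have hle2 : 2 ^ (c + K) ≤ 2 ^ (c + (K + 1)) := Nat.pow_le_pow_right (by norm_num) (by omega)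
    have hM : 2 ^ (c + K) - 2 ^ c ≤ 2 ^ (c + (K + 1)) - 2 ^ c := by omega
    rw [Finset.sum_range_succ, ih,
      ← Finset.sum_range_add_sum_Ico (fun i => a (2 ^ c + i)) hM,
      Finset.sum_Ico_eq_sum_range]
    congr 1
    have hpow : 2 ^ (c + (K + 1)) = 2 ^ (c + K) * 2 := by
      have hc : c + (K + 1) = (c + K) + 1 := by omega
      rw [hc, pow_succ]
    have hdiff : 2 ^ (c + (K + 1)) - 2 ^ c - (2 ^ (c + K) - 2 ^ c) = 2 ^ (c + K) := by omega
    rw [hdiff]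
    refine Finset.sum_congr rfl fun i _ => ?_
    congr 1
    have h1 : 2 ^ (c + K) * 1 = 2 ^ (c + K) := by ring
    omega

lemma summable_B_shift (hpos : ∀ n ≥ 1, 0 < a n) (hsumm : Summable fun n => a (n + 1))
    (c : ℕ) : Summable fun k => B a (c + k) 1 := by
  have h := (summable_nat_add_iff (f := fun k => B a k 1) c).mpr (summable_B hpos hsumm le_rfl)
  have he : (fun k => B a (c + k) 1) = fun k => B a (k + c) 1 := by
    funext k; congr 1; omega
  rw [he]; exact h

lemma tail_eq (hpos : ∀ n ≥ 1, 0 < a n) (hsumm : Summable fun n => a (n + 1)) (c : ℕ) :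
    ∑' k, B a (c + k) 1 = xseq a (2 ^ c) := by
  have hc1 : 1 ≤ 2 ^ c := Nat.one_le_two_pow
  have hs := summable_B_shift hpos hsumm c
  have T1 : Filter.Tendsto (fun K => ∑ k ∈ Finset.range K, B a (c + k) 1) atTop
      (nhds (∑' k, B a (c + k) 1)) := hs.hasSum.tendsto_sum_nat
  have hg : Summable fun i => a (2 ^ c + i) := summable_tail hsumm hc1
  have T2 : Filter.Tendsto (fun N => ∑ i ∈ Finset.range N, a (2 ^ c + i)) atTop
      (nhds (xseq a (2 ^ c))) := hg.hasSum.tendsto_sum_nat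
  have T3 : Filter.Tendsto (fun K : ℕ => 2 ^ (c + K) - 2 ^ c) atTop atTop := by
    refine tendsto_atTop_mono (fun K => ?_) tendsto_id
    have h1 : K < 2 ^ K := Nat.lt_two_pow_self
    have h2 : 2 ^ (c + K) = 2 ^ c * 2 ^ K := pow_add 2 c K
    obtain ⟨d, hd⟩ : ∃ d, 2 ^ c = d + 1 := ⟨2 ^ c - 1, by omega⟩
    rw [hd] at h2
    have h3 : d * 1 ≤ d * 2 ^ K := Nat.mul_le_mul_left d (by omega)
    have h4 : (d + 1) * 2 ^ K = d * 2 ^ K + 2 ^ K := by ring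
    simp only [id]
    omega
  have T4 : Filter.Tendsto (fun K => ∑ i ∈ Finset.range (2 ^ (c + K) - 2 ^ c), a (2 ^ c + i))
      atTop (nhds (xseq a (2 ^ c))) := T2.comp T3
  have heq : (fun K => ∑ k ∈ Finset.range K, B a (c + k) 1)
      = fun K => ∑ i ∈ Finset.range (2 ^ (c + K) - 2 ^ c), a (2 ^ c + i) := by
    funext K; exact tail_partial a c K
  rw [heq] at T1
  exact tendsto_nhds_unique T1 T4

lemma clen_ge (hpos : ∀ n ≥ 1, 0 < a n) (hmono : ∀ n ≥ 1, a (n + 1) ≤ a n)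
    (hsumm : Summable fun n => a (n + 1)) {n m : ℕ} (h1 : 2 ^ n ≤ m) (h2 : m < 2 ^ (n + 1)) :
    sseq a (n + 1) ≤ clen a m := by
  have hm1 : 1 ≤ m := le_trans Nat.one_le_two_pow h1
  have key : ∀ k : ℕ, B a (n + 1 + k) 1 / 2 ^ (n + 1) ≤ B a k m := by
    intro k
    have hidx : ∀ i < 2 ^ k, 2 ^ k * m + i < 2 ^ (n + 1 + k) := by
      intro i hi
      have h3 : 2 ^ (n + 1 + k) = 2 ^ k * 2 ^ (n + 1) := by
        rw [← pow_add]; congr 1; omega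
      have h4 : 2 ^ k * (m + 1) ≤ 2 ^ k * 2 ^ (n + 1) := Nat.mul_le_mul_left _ (by omega)
      have h5 : 2 ^ k * (m + 1) = 2 ^ k * m + 2 ^ k := by ring
      omega
    have hup : B a (n + 1 + k) 1 ≤ (2 ^ (n + 1 + k) : ℝ) * a (2 ^ (n + 1 + k)) := by
      have h := Finset.sum_le_card_nsmul (Finset.range (2 ^ (n + 1 + k)))
        (fun i => a (2 ^ (n + 1 + k) * 1 + i)) (a (2 ^ (n + 1 + k)))
        (fun i _ => amono hmono _ _ Nat.one_le_two_pow (by omega))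
      simpa [B, nsmul_eq_mul] using h
    have hlow : (2 ^ k : ℝ) * a (2 ^ (n + 1 + k)) ≤ B a k m := by
      have h := Finset.card_nsmul_le_sum (Finset.range (2 ^ k))
        (fun i => a (2 ^ k * m + i)) (a (2 ^ (n + 1 + k))) ?_
      · simpa [B, nsmul_eq_mul] using h
      · intro i hi
        refine amono hmono _ _ ?_ (hidx i (Finset.mem_range.mp hi)).le
        have h4 : 1 ≤ 2 ^ k := Nat.one_le_two_pow
        have h5 : 2 ^ k * 1 ≤ 2 ^ k * m := Nat.mul_le_mul_left _ hm1
        omega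
    have hdiv : B a (n + 1 + k) 1 / 2 ^ (n + 1) ≤ (2 ^ k : ℝ) * a (2 ^ (n + 1 + k)) := by
      rw [div_le_iff₀ (by positivity)]
      have he : (2 ^ k : ℝ) * a (2 ^ (n + 1 + k)) * 2 ^ (n + 1)
          = (2 ^ (n + 1 + k) : ℝ) * a (2 ^ (n + 1 + k)) := by
        rw [show (2 : ℝ) ^ (n + 1 + k) = 2 ^ k * 2 ^ (n + 1) by rw [← pow_add]; congr 1; omega]
        ring
      rw [he]; exact hup
    exact hdiv.trans hlow
  have hsum1 : Summable fun k => B a (n + 1 + k) 1 / 2 ^ (n + 1) :=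
    (summable_B_shift hpos hsumm (n + 1)).div_const _
  have hsum2 : Summable fun k => B a k m := summable_B hpos hsumm hm1
  have hle := hsum1.tsum_le_tsum key hsum2
  rw [tsum_div_const, tail_eq hpos hsumm (n + 1)] at hle
  rw [clen_eq]
  exact hle

lemma lft_even (a : ℕ → ℝ) (p : ℕ) : lft a (2 * p + 2) = lft a (p + 1) := by
  rw [show 2 * p + 2 = (2 * p) + 2 by ring, lft]
  have h : (2 * p + 2) % 2 = 0 := by omega
  have h2 : (2 * p + 2) / 2 = p + 1 := by omega
  simp only [h, h2, if_pos]

lemma lft_odd (a : ℕ → ℝ) (p : ℕ) :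
    lft a (2 * p + 3) = lft a (p + 1) + clen a (2 * p + 2) + a (p + 1) := by
  rw [show 2 * p + 3 = (2 * p + 1) + 2 by ring, lft]
  have h : ¬((2 * p + 1 + 2) % 2 = 0) := by omega
  have h2 : (2 * p + 1 + 2) / 2 = p + 1 := by omega
  rw [if_neg h, h2]

lemma lft_double {m : ℕ} (hm : 1 ≤ m) : lft a (2 * m) = lft a m := by
  obtain ⟨p, rfl⟩ : ∃ p, m = p + 1 := ⟨m - 1, by omega⟩
  rw [show 2 * (p + 1) = 2 * p + 2 by ring, lft_even]

lemma lft_double_succ {m : ℕ} (hm : 1 ≤ m) :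
    lft a (2 * m + 1) = lft a m + clen a (2 * m) + a m := by
  obtain ⟨p, rfl⟩ : ∃ p, m = p + 1 := ⟨m - 1, by omega⟩
  rw [show 2 * (p + 1) + 1 = 2 * p + 3 by ring, lft_odd,
    show 2 * p + 2 = 2 * (p + 1) by ring]

lemma right_eq (hpos : ∀ n ≥ 1, 0 < a n) (hsumm : Summable fun n => a (n + 1))
    {m : ℕ} (hm : 1 ≤ m) :
    lft a (2 * m + 1) + clen a (2 * m + 1) = lft a m + clen a m := by
  rw [lft_double_succ hm, clen_rec hpos hsumm hm]
  ring

lemma sep (hpos : ∀ n ≥ 1, 0 < a n) (hsumm : Summable fun n => a (n + 1)) :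
    ∀ m : ℕ, 1 ≤ m → (∀ k : ℕ, m + 1 ≠ 2 ^ k) → lft a m + clen a m < lft a (m + 1) := by
  intro m
  induction m using Nat.strong_induction_on with
  | _ m ih =>
    intro hm hnp
    rcases Nat.even_or_odd m with ⟨p, hp⟩ | ⟨p, hp⟩
    · -- m = 2p
      have hp1 : 1 ≤ p := by omega
      have hm2 : m = 2 * p := by omega
      subst hm2
      rw [show 2 * p + 1 = 2 * p + 1 from rfl, lft_double_succ hp1, lft_double hp1]
      have := hpos p hp1
      linarith
    · -- m = 2p + 1
      have hm2 : m = 2 * p + 1 := by omega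
      have hp1 : 1 ≤ p := by
        rcases Nat.eq_zero_or_pos p with h | h
        · exfalso; exact hnp 1 (by omega)
        · exact h
      subst hm2
      have h1 : lft a (2 * p + 1) + clen a (2 * p + 1) = lft a p + clen a p :=
        right_eq hpos hsumm hp1
      have h2 : lft a (2 * p + 1 + 1) = lft a (p + 1) := by
        rw [show 2 * p + 1 + 1 = 2 * (p + 1) by ring, lft_double (by omega)]
      rw [h1, h2]
      refine ih p (by omega) hp1 fun k hk => ?_
      exact hnp (k + 1) (by rw [pow_succ]; omega)

lemma notpow {n x : ℕ} (h1 : 2 ^ n < x) (h2 : x < 2 ^ (n + 1)) : ∀ k, x ≠ 2 ^ k := by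
  intro k hk
  subst hk
  have hkn : n < k := (Nat.pow_lt_pow_iff_right (a := 2) (by norm_num)).mp h1
  have hkn2 : k < n + 1 := (Nat.pow_lt_pow_iff_right (a := 2) (by norm_num)).mp h2
  omega

lemma chain (hpos : ∀ n ≥ 1, 0 < a n) (hsumm : Summable fun n => a (n + 1))
    {n m1 m2 : ℕ} (h1 : 2 ^ n ≤ m1) (h12 : m1 < m2) (h2 : m2 < 2 ^ (n + 1)) :
    lft a m1 + clen a m1 < lft a m2 := by
  have hm1 : 1 ≤ m1 := le_trans Nat.one_le_two_pow h1
  revert h2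
  induction m2, h12 using Nat.le_induction with
  | base =>
    intro h2
    exact sep hpos hsumm m1 hm1 (notpow (by omega) h2)
  | succ m2 hm2 ih =>
    intro h2
    have hA := ih (by omega)
    have hm2' : 1 ≤ m2 := by omega
    have hsep := sep hpos hsumm m2 hm2' (notpow (by omega) h2)
    have hcn := clen_nonneg hpos hm2'
    linarith

lemma child_even (hpos : ∀ n ≥ 1, 0 < a n) (hsumm : Summable fun n => a (n + 1))
    {m : ℕ} (hm : 1 ≤ m) : node a (2 * m) ⊆ node a m := by
  have hrec := clen_rec hpos hsumm hm
  have h1 := clen_nonneg hpos (show 1 ≤ 2 * m + 1 by omega)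
  have h2 := (hpos m hm).le
  refine Set.Icc_subset_Icc ?_ ?_
  · rw [lft_double hm]
  · rw [lft_double hm]; linarith

lemma child_odd (hpos : ∀ n ≥ 1, 0 < a n) (hsumm : Summable fun n => a (n + 1))
    {m : ℕ} (hm : 1 ≤ m) : node a (2 * m + 1) ⊆ node a m := by
  have h1 := clen_nonneg hpos (show 1 ≤ 2 * m by omega)
  have h2 := (hpos m hm).le
  refine Set.Icc_subset_Icc ?_ ?_
  · rw [lft_double_succ hm]; linarith
  · rw [right_eq hpos hsumm hm]

end CantorAuxPf

open Classical in
/-- A set `U` with `s_{t+1} < |U| ≤ s_t` meets at most 4 of the step-`(t-1)` intervals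
and at most 8 of the step-`t` intervals of the decreasing Cantor set construction. -/
theorem intersect_at_most (a : ℕ → ℝ) (hpos : ∀ n ≥ 1, 0 < a n) (hmono : ∀ n ≥ 1, a (n + 1) ≤ a n)
    (hsumm : Summable fun n => a (n + 1)) (htot : ∑' n : ℕ, a (n + 1) = 1)
    (t : ℕ) (ht : 1 ≤ t) (U : Set ℝ)
    (hU₁ : sseq a (t + 1) < Metric.diam U) (hU₂ : Metric.diam U ≤ sseq a t) :
    ((Finset.Icc 1 (2 ^ (t - 1))).filter
        (fun j => (U ∩ node a (2 ^ (t - 1) + j - 1)).Nonempty)).card ≤ 4 ∧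
    ((Finset.Icc 1 (2 ^ t)).filter
        (fun j => (U ∩ node a (2 ^ t + j - 1)).Nonempty)).card ≤ 8 := by
  classical
  obtain ⟨n, hn⟩ : ∃ n, t = n + 1 := ⟨t - 1, by omega⟩
  subst hn
  simp only [Nat.add_sub_cancel]
  set F : Finset ℕ := (Finset.Icc 1 (2 ^ n)).filter
    (fun j => (U ∩ node a (2 ^ n + j - 1)).Nonempty) with hF
  have h2n : 0 < 2 ^ n := Nat.pow_pos (by norm_num)
  have hpow : (2 : ℕ) ^ (n + 1) = 2 * 2 ^ n := by rw [pow_succ]; ring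
  have hs0 : 0 ≤ sseq a (n + 1 + 1) := by
    have := CantorAuxPf.xseq_nonneg hpos (N := 2 ^ (n + 1 + 1)) Nat.one_le_two_pow
    simp only [sseq]
    exact div_nonneg this (by positivity)
  have hbd : Metric.ediam U ≠ ⊤ := by
    intro h
    have hd0 : Metric.diam U = 0 := by simp [Metric.diam, h]
    linarith
  -- Part 1 : at most 2 (hence 4) step-(t-1) intervals meet U
  have hcard : F.card ≤ 2 := by
    by_contra hc
    push_neg at hc
    have hc3 : 3 ≤ F.card := by omega
    have hne : F.Nonempty := Finset.card_pos.mp (by omega)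
    set j1 := F.min' hne with hj1
    set j3 := F.max' hne with hj3
    have hj13 : j1 < j3 := F.min'_lt_max'_of_card (by omega)
    have hj1F : j1 ∈ F := F.min'_mem hne
    have hj3F : j3 ∈ F := F.max'_mem hne
    have hj3e : j3 ∈ F.erase j1 := Finset.mem_erase.mpr ⟨by omega, hj3F⟩
    have hcne : ((F.erase j1).erase j3).Nonempty := by
      refine Finset.card_pos.mp ?_
      rw [Finset.card_erase_of_mem hj3e, Finset.card_erase_of_mem hj1F]
      omega
    obtain ⟨j2, hj2⟩ := hcne
    have hj2F : j2 ∈ F := Finset.mem_of_mem_erase (Finset.mem_of_mem_erase hj2)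
    have hj2ne3 : j2 ≠ j3 := (Finset.mem_erase.mp hj2).1
    have hj2ne1 : j2 ≠ j1 := (Finset.mem_erase.mp (Finset.mem_of_mem_erase hj2)).1
    have hj12 : j1 < j2 := lt_of_le_of_ne (F.min'_le j2 hj2F) (Ne.symm hj2ne1)
    have hj23 : j2 < j3 := lt_of_le_of_ne (F.le_max' j2 hj2F) hj2ne3
    have hmem : ∀ j ∈ F, j ∈ Finset.Icc 1 (2 ^ n) ∧ (U ∩ node a (2 ^ n + j - 1)).Nonempty := by
      intro j hj
      exact Finset.mem_filter.mp hj
    obtain ⟨hj1I, hp⟩ := hmem j1 hj1F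
    obtain ⟨hj2I, _⟩ := hmem j2 hj2F
    obtain ⟨hj3I, hq⟩ := hmem j3 hj3F
    simp only [Finset.mem_Icc] at hj1I hj2I hj3I
    set m1 := 2 ^ n + j1 - 1
    set m2 := 2 ^ n + j2 - 1
    set m3 := 2 ^ n + j3 - 1
    have hm1a : 2 ^ n ≤ m1 := by omega
    have hm2a : 2 ^ n ≤ m2 := by omega
    have hm12 : m1 < m2 := by omega
    have hm23 : m2 < m3 := by omega
    have hm2b : m2 < 2 ^ (n + 1) := by omega
    have hm3b : m3 < 2 ^ (n + 1) := by omega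
    obtain ⟨p, hpU, hpI⟩ := hp
    obtain ⟨q, hqU, hqI⟩ := hq
    have hp2 : p ≤ lft a m1 + clen a m1 := hpI.2
    have hq1 : lft a m3 ≤ q := hqI.1
    have hch1 : lft a m1 + clen a m1 < lft a m2 :=
      CantorAuxPf.chain hpos hsumm hm1a hm12 hm2b
    have hch2 : lft a m2 + clen a m2 < lft a m3 :=
      CantorAuxPf.chain hpos hsumm hm2a hm23 hm3b
    have hcg : sseq a (n + 1) ≤ clen a m2 :=
      CantorAuxPf.clen_ge hpos hmono hsumm hm2a hm2b
    have hdist : dist q p ≤ Metric.diam U := Metric.dist_le_diam_of_mem' hbd hqU hpU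
    have habs : q - p ≤ dist q p := by
      rw [Real.dist_eq]
      exact le_abs_self _
    linarith
  refine ⟨le_trans hcard (by norm_num), ?_⟩
  -- Part 2 : at most 8 step-t intervals meet U
  set F' : Finset ℕ := (Finset.Icc 1 (2 ^ (n + 1))).filter
    (fun j => (U ∩ node a (2 ^ (n + 1) + j - 1)).Nonempty) with hF'
  set f : ℕ → ℕ := fun j => (2 ^ (n + 1) + j - 1) / 2 + 1 - 2 ^ n with hf
  have himg : ∀ j ∈ F', f j ∈ F := by
    intro j hj
    obtain ⟨hjI, hjne⟩ := Finset.mem_filter.mp hj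
    simp only [Finset.mem_Icc] at hjI
    set m := 2 ^ (n + 1) + j - 1 with hm
    set pm := m / 2 with hpm
    have hpm1 : 2 ^ n ≤ pm := by omega
    have hpm2 : pm < 2 ^ (n + 1) := by omega
    have hfj : f j = pm + 1 - 2 ^ n := rfl
    have hnode : 2 ^ n + f j - 1 = pm := by omega
    have hsub : node a m ⊆ node a pm := by
      rcases Nat.even_or_odd m with ⟨c, hc⟩ | ⟨c, hc⟩
      · have : m = 2 * pm := by omega
        rw [this]
        exact CantorAuxPf.child_even hpos hsumm (by omega)
      · have : m = 2 * pm + 1 := by omega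
        rw [this]
        exact CantorAuxPf.child_odd hpos hsumm (by omega)
    refine Finset.mem_filter.mpr ⟨Finset.mem_Icc.mpr ⟨by omega, by omega⟩, ?_⟩
    rw [hnode]
    obtain ⟨x, hxU, hxI⟩ := hjne
    exact ⟨x, hxU, hsub hxI⟩
  have himgsub : F'.image f ⊆ F := Finset.image_subset_iff.mpr himg
  have hfib : ∀ b ∈ F'.image f, (F'.filter (fun x => f x = b)).card ≤ 2 := by
    intro b hb
    have hbF : b ∈ F := himgsub hb
    have hbI : 1 ≤ b ∧ b ≤ 2 ^ n := by
      have := (Finset.mem_filter.mp hbF).1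
      exact Finset.mem_Icc.mp this
    have hsub2 : F'.filter (fun x => f x = b)
        ⊆ {2 * (b + 2 ^ n - 1) + 1 - 2 ^ (n + 1), 2 * (b + 2 ^ n - 1) + 2 - 2 ^ (n + 1)} := by
      intro x hx
      obtain ⟨hxF, hfx⟩ := Finset.mem_filter.mp hx
      have hxI := Finset.mem_Icc.mp (Finset.mem_filter.mp hxF).1
      simp only [hf] at hfx
      simp only [Finset.mem_insert, Finset.mem_singleton]
      omega
    calc (F'.filter (fun x => f x = b)).card
        ≤ ({2 * (b + 2 ^ n - 1) + 1 - 2 ^ (n + 1), 2 * (b + 2 ^ n - 1) + 2 - 2 ^ (n + 1)}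
            : Finset ℕ).card := Finset.card_le_card hsub2
      _ ≤ 2 := Finset.card_insert_le _ _ |>.trans (by simp)
  have h8 : F'.card ≤ 2 * (F'.image f).card := Finset.card_le_mul_card_image F' 2 hfib
  have h9 : (F'.image f).card ≤ 2 := le_trans (Finset.card_le_card himgsub) hcard
  omega
end

section
/- Let a = {a_n} be positive non-increasing with ∑ a_n = 1, doubling (a_n ≤ c·a_{2n}), and let s > 1. Define a subsequence b of a by the block construction b_{2^k+i} := a_{2^{j(k)+1}+i} (with offset corrections when j(k) repeats), where j(k) is chosen so that a_{2^{j(k)+1}} < (a_{2^k})^s ≤ a_{2^{j(k)}} and j(k) ≥ k. Then there exists c' > 0 such that c'^{-1}(a_{2^k})^s ≤ b_{2^k+i} ≤ c'(a_{2^k})^s for all k ≥ 1 and 0 ≤ i < 2^k. -/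
open Filter Set Topology

lemma geom_aux' (m : ℕ) : ∀ k, m ≤ k → (∑ r ∈ Finset.Icc 1 m, 2^(k-r) : ℕ) + 2^(k-m) = 2^k := by
  induction m with
  | zero => simp
  | succ n ih =>
    intro k hk
    rw [Finset.sum_Icc_succ_top (by omega)]
    have h := ih k (by omega)
    have h2 : k - n = (k - (n+1)) + 1 := by omega
    rw [h2, pow_succ] at h
    omega

/-- The blockwise subsequence `b` built from a doubling sequence `a` via the indices
`j(k)` (with `a_{2^{j(k)+1}} < (a_{2^k})^s ≤ a_{2^{j(k)}}`, `j(k) ≥ k`) satisfies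
`b_{2^k+i} ≍ (a_{2^k})^s` uniformly. Here `m k` is the largest `m ≤ k-1` with
`j(k) = j(k-1) = ⋯ = j(k-m)`, and
`b_{2^k+i} = a_{2^{j(k)+1} + ∑_{r=1}^{m k} 2^{k-r} + i}`. -/
theorem block_subsequence_comparable (a : ℕ → ℝ) (hpos : ∀ n ≥ 1, 0 < a n) (hmono : ∀ n ≥ 1, a (n + 1) ≤ a n)
    (hsumm : Summable fun n => a (n + 1)) (htot : ∑' n : ℕ, a (n + 1) = 1)
    (c : ℝ) (hc : 0 < c) (hdoub : ∀ n ≥ 1, a n ≤ c * a (2 * n))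
    (s : ℝ) (hs : 1 < s)
    (j : ℕ → ℕ) (hj0 : j 0 = 0)
    (hj : ∀ k ≥ 1, k ≤ j k ∧
      a (2 ^ (j k + 1)) < a (2 ^ k) ^ s ∧ a (2 ^ k) ^ s ≤ a (2 ^ (j k)))
    (m : ℕ → ℕ)
    (hm : ∀ k ≥ 1, m k ≤ k - 1 ∧ (∀ r ≤ m k, j (k - r) = j k) ∧
      (m k + 1 ≤ k - 1 → j (k - (m k + 1)) ≠ j k))
    (b : ℕ → ℝ)
    (hb : ∀ k ≥ 1, ∀ i < 2 ^ k,
      b (2 ^ k + i) = a (2 ^ (j k + 1) + (∑ r ∈ Finset.Icc 1 (m k), 2 ^ (k - r)) + i)) :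
    ∃ c' > (0:ℝ), ∀ k ≥ 1, ∀ i < 2 ^ k,
      c'⁻¹ * a (2 ^ k) ^ s ≤ b (2 ^ k + i) ∧ b (2 ^ k + i) ≤ c' * a (2 ^ k) ^ s := by
  have mono : ∀ p q : ℕ, 1 ≤ p → p ≤ q → a q ≤ a p := by
    intro p q hp hpq
    induction q with
    | zero => omega
    | succ n ih =>
      rcases Nat.eq_or_lt_of_le hpq with h | h
      · exact le_of_eq (by rw [h])
      · exact le_trans (hmono n (by omega)) (ih (by omega))
  have hc1 : 1 ≤ c := by
    have h1 := hdoub 1 le_rfl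
    have h2 := mono 1 2 le_rfl (by norm_num)
    have h3 := hpos 1 le_rfl
    nlinarith
  refine ⟨c ^ 2, by positivity, ?_⟩
  intro k hk i hi
  obtain ⟨hjk, hlt, hle⟩ := hj k hk
  obtain ⟨hmk, -, -⟩ := hm k hk
  set S : ℕ := ∑ r ∈ Finset.Icc 1 (m k), 2^(k-r) with hS
  have hgeom : S + 2^(k - m k) = 2^k := geom_aux' (m k) k (by omega)
  have hSlt : S < 2^k := by
    have : 0 < 2^(k - m k) := Nat.pow_pos (by norm_num)
    omega
  have hA : 0 < a (2^k) ^ s :=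
    Real.rpow_pos_of_pos (hpos _ (Nat.one_le_two_pow)) s
  rw [hb k hk i hi]
  set N : ℕ := 2 ^ (j k + 1) + S + i with hN
  have hN1 : 1 ≤ N := by
    have : 0 < 2 ^ (j k + 1) := Nat.pow_pos (by norm_num)
    omega
  constructor
  · -- lower bound
    have hNle : N ≤ 2 ^ (j k + 2) := by
      have h1 : (2:ℕ)^(k+1) ≤ 2^(j k + 1) := Nat.pow_le_pow_right (by norm_num) (by omega)
      have h2 : (2:ℕ)^(k+1) = 2 * 2^k := by rw [pow_succ]; ring
      have h3 : (2:ℕ)^(j k + 2) = 2 * 2^(j k + 1) := by rw [pow_succ]; ring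
      omega
    have hm1 : a (2 ^ (j k + 2)) ≤ a N := mono N (2 ^ (j k + 2)) hN1 hNle
    have hd1 : a (2 ^ (j k)) ≤ c * a (2 ^ (j k + 1)) := by
      have := hdoub (2 ^ (j k)) (Nat.one_le_two_pow)
      rwa [show 2 * 2 ^ (j k) = 2 ^ (j k + 1) by rw [pow_succ]; ring] at this
    have hd2 : a (2 ^ (j k + 1)) ≤ c * a (2 ^ (j k + 2)) := by
      have := hdoub (2 ^ (j k + 1)) (Nat.one_le_two_pow)
      rwa [show 2 * 2 ^ (j k + 1) = 2 ^ (j k + 2) by rw [pow_succ]; ring] at this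
    rw [inv_mul_le_iff₀ (by positivity)]
    nlinarith [hle, hd1, hd2, hm1, hc]
  · -- upper bound
    have hm2 : a N ≤ a (2 ^ (j k + 1)) :=
      mono (2 ^ (j k + 1)) N Nat.one_le_two_pow (by omega)
    have hc2 : (1:ℝ) ≤ c ^ 2 := by nlinarith
    nlinarith [hlt, hm2, hA, hc2]
end
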